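/- Let κ be a weakly inaccessible cardinal and let g, h ∈ κ^κ with lim_{α→κ} g(α) = lim_{α→κ} h(α) = κ. Then 𝔟_g(p∈*) = 𝔟_h(p∈*) and 𝔡_g(p∈*) = 𝔡_h(p∈*). -/

import Mathlib

namespace GenCichon

noncomputable section

open Cardinal Set Ordinal

variable (κ : Cardinal.{0})

/-- The ordinals below `κ`, i.e. the cardinal `κ` viewed as a set of ordinals. -/
abbrev Idx : Type 1 := ↥(Set.Iio κ.ord)

/-- The generalized Cantor space `2^κ`. -/
abbrev GenCantor : Type 1 := Idx κ → Bool

/-- The generalized Baire space `κ^κ`. -/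
abbrev GenBaire : Type 1 := Idx κ → Idx κ

/-- The basic open (cylinder) set `[σ]` determined by the element `σ` of `2^{<κ}`
with domain `[0, δ)` (values of `σ` at or above `δ` are irrelevant). -/
def cyl (δ : Ordinal) (σ : Ordinal → Bool) : Set (GenCantor κ) :=
  { x | ∀ β : Idx κ, β.1 < δ → x β = σ β.1 }

/-- `A ⊆ 2^κ` is nowhere dense: every basic open set `[σ]`, `σ ∈ 2^{<κ}`, has a
basic open refinement `[σ'] ⊆ [σ]` disjoint from `A`. -/
def IsNwd (A : Set (GenCantor κ)) : Prop :=
  ∀ δ < κ.ord, ∀ σ : Ordinal → Bool, ∃ δ', δ ≤ δ' ∧ δ' < κ.ord ∧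
    ∃ σ' : Ordinal → Bool, (∀ β < δ, σ' β = σ β) ∧ cyl κ δ' σ' ∩ A = ∅

/-- `A ⊆ 2^κ` is `κ`-meager: a union of `κ` many nowhere dense sets. -/
def IsKMeager (A : Set (GenCantor κ)) : Prop :=
  ∃ B : Idx κ → Set (GenCantor κ), (∀ i, IsNwd κ (B i)) ∧ A = ⋃ i, B i

/-- The covering number of the `κ`-meager ideal. -/
def covM : Cardinal.{1} :=
  sInf { c : Cardinal.{1} | ∃ J : Set (Set (GenCantor κ)),
    (∀ A ∈ J, IsKMeager κ A) ∧ ⋃₀ J = Set.univ ∧ c = #J }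

/-- The uniformity number of the `κ`-meager ideal. -/
def nonM : Cardinal.{1} :=
  sInf { c : Cardinal.{1} | ∃ X : Set (GenCantor κ), ¬ IsKMeager κ X ∧ c = #X }

/-- The additivity number of the `κ`-meager ideal. -/
def addM : Cardinal.{1} :=
  sInf { c : Cardinal.{1} | ∃ J : Set (Set (GenCantor κ)),
    (∀ A ∈ J, IsKMeager κ A) ∧ ¬ IsKMeager κ (⋃₀ J) ∧ c = #J }

/-- The cofinality number of the `κ`-meager ideal. -/
def cofM : Cardinal.{1} :=
  sInf { c : Cardinal.{1} | ∃ J : Set (Set (GenCantor κ)),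
    (∀ A ∈ J, IsKMeager κ A) ∧ (∀ A, IsKMeager κ A → ∃ B ∈ J, A ⊆ B) ∧ c = #J }

/-- `g` eventually dominates `f` (`f <* g`). -/
def EvDom (f g : GenBaire κ) : Prop :=
  ∃ α : Idx κ, ∀ β : Idx κ, α < β → f β < g β

/-- The unbounding number `𝔟_κ`. -/
def bK : Cardinal.{1} :=
  sInf { c : Cardinal.{1} | ∃ F : Set (GenBaire κ),
    (∀ g : GenBaire κ, ∃ f ∈ F, ¬ EvDom κ f g) ∧ c = #F }

/-- The dominating number `𝔡_κ`. -/
def dK : Cardinal.{1} :=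
  sInf { c : Cardinal.{1} | ∃ F : Set (GenBaire κ),
    (∀ g : GenBaire κ, ∃ f ∈ F, EvDom κ g f) ∧ c = #F }

/-- `f` and `g` are eventually different (`f ≠* g`). -/
def EvDiff (f g : GenBaire κ) : Prop :=
  #{ α : Idx κ | f α = g α } < Cardinal.lift.{1} κ

/-- `𝔟_κ(≠*)`: least size of a family such that every `g` is cofinally matching
with some member of it. -/
def bNeq : Cardinal.{1} :=
  sInf { c : Cardinal.{1} | ∃ F : Set (GenBaire κ),
    (∀ g : GenBaire κ, ∃ f ∈ F, ¬ EvDiff κ f g) ∧ c = #F }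

/-- `𝔡_κ(≠*)`: least size of a family such that every `g` is eventually different
from some member of it. -/
def dNeq : Cardinal.{1} :=
  sInf { c : Cardinal.{1} | ∃ F : Set (GenBaire κ),
    (∀ g : GenBaire κ, ∃ f ∈ F, EvDiff κ f g) ∧ c = #F }

/-- An interval partition of `κ`: a strictly increasing continuous sequence
`(pts α : α < κ)` of ordinals below `κ` with `pts 0 = 0`; the `α`-th interval is
`[pts α, pts (α+1))`.  (Values at or above `κ` are normalized to `0`, so that an
interval partition is determined by its restriction below `κ`.) -/
structure IntervalPartition where
  pts : Ordinal → Ordinal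
  zero : pts 0 = 0
  lt_ord : ∀ α < κ.ord, pts α < κ.ord
  strictMono : ∀ α β : Ordinal, α < β → β < κ.ord → pts α < pts β
  isCont : ∀ δ < κ.ord, Order.IsSuccLimit δ → pts δ = ⨆ β : ↥(Set.Iio δ), pts β.1
  eq_zero_of_le : ∀ α, κ.ord ≤ α → pts α = 0

/-- The `β`-th interval of `J` is included in the `α`-th interval of `I`. -/
def SubIntv (J : IntervalPartition κ) (β : Ordinal) (I : IntervalPartition κ)
    (α : Ordinal) : Prop :=
  I.pts α ≤ J.pts β ∧ J.pts (β + 1) ≤ I.pts (α + 1)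

/-- `I` dominates `J` (`J ≤* I`): from some point on, every interval of `I`
contains an interval of `J`. -/
def IPDom (J I : IntervalPartition κ) : Prop :=
  ∃ γ < κ.ord, ∀ α, γ < α → α < κ.ord → ∃ β < κ.ord, SubIntv κ J β I α

/-- `y` matches the `κ`-chopped function `(x, I)`: `y` and `x` agree on cofinally
many intervals of `I`. -/
def Matches (y x : GenCantor κ) (I : IntervalPartition κ) : Prop :=
  ∀ γ < κ.ord, ∃ α, γ ≤ α ∧ α < κ.ord ∧
    ∀ β : Idx κ, I.pts α ≤ β.1 → β.1 < I.pts (α + 1) → y β = x β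

/-- The set of elements of `2^κ` matching the `κ`-chopped function `(x, I)`. -/
def MatchSet (x : GenCantor κ) (I : IntervalPartition κ) : Set (GenCantor κ) :=
  { y | Matches κ y x I }

/-- `h ∈ κ^κ` tends to `κ`: `lim_{α → κ} h(α) = κ`. -/
def TendsToTop (h : GenBaire κ) : Prop :=
  ∀ γ : Idx κ, ∃ α : Idx κ, ∀ β : Idx κ, α ≤ β → γ ≤ h β

/-- `φ` is an `h`-slalom: `φ(α)` is a subset of `κ` of cardinality `|h(α)|`. -/
def IsSlalom (h : GenBaire κ) (φ : Idx κ → Set (Idx κ)) : Prop :=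
  ∀ α : Idx κ, #(φ α) = Cardinal.lift.{1} (h α).1.card

/-- The (total) slalom `φ` localizes `f` (`f ∈* φ`). -/
def Localizes (φ : Idx κ → Set (Idx κ)) (f : GenBaire κ) : Prop :=
  #{ α : Idx κ | f α ∉ φ α } < Cardinal.lift.{1} κ

/-- `𝔟_h(∈*)`. -/
def bLoc (h : GenBaire κ) : Cardinal.{1} :=
  sInf { c : Cardinal.{1} | ∃ F : Set (GenBaire κ),
    (∀ φ : Idx κ → Set (Idx κ), IsSlalom κ h φ → ∃ f ∈ F, ¬ Localizes κ φ f) ∧ c = #F }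

/-- `𝔡_h(∈*)`. -/
def dLoc (h : GenBaire κ) : Cardinal.{1} :=
  sInf { c : Cardinal.{1} | ∃ Φ : Set (Idx κ → Set (Idx κ)),
    (∀ φ ∈ Φ, IsSlalom κ h φ) ∧ (∀ f : GenBaire κ, ∃ φ ∈ Φ, Localizes κ φ f) ∧ c = #Φ }

/-- A partial `h`-slalom: a slalom whose domain is a subset of `κ` of cardinality `κ`.
(The values outside the domain are normalized to `∅`.) -/
structure PartialSlalom (h : GenBaire κ) where
  dom : Set (Idx κ)
  dom_card : #dom = Cardinal.lift.{1} κ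
  fn : Idx κ → Set (Idx κ)
  fn_card : ∀ α ∈ dom, #(fn α) = Cardinal.lift.{1} (h α).1.card
  eq_empty_of_not_mem : ∀ α ∉ dom, fn α = ∅

/-- The partial slalom `φ` localizes `f` (`f ∈* φ`). -/
def PLocalizes {h : GenBaire κ} (φ : PartialSlalom κ h) (f : GenBaire κ) : Prop :=
  #{ α : Idx κ | α ∈ φ.dom ∧ f α ∉ φ.fn α } < Cardinal.lift.{1} κ

/-- `𝔟_h(p∈*)`. -/
def bPLoc (h : GenBaire κ) : Cardinal.{1} :=
  sInf { c : Cardinal.{1} | ∃ F : Set (GenBaire κ),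
    (∀ φ : PartialSlalom κ h, ∃ f ∈ F, ¬ PLocalizes κ φ f) ∧ c = #F }

/-- `𝔡_h(p∈*)`. -/
def dPLoc (h : GenBaire κ) : Cardinal.{1} :=
  sInf { c : Cardinal.{1} | ∃ Φ : Set (PartialSlalom κ h),
    (∀ f : GenBaire κ, ∃ φ ∈ Φ, PLocalizes κ φ f) ∧ c = #Φ }

/-- `X ⊆ 2^κ` is open in the `<κ`-box topology. -/
def IsOpenK (X : Set (GenCantor κ)) : Prop :=
  ∀ x ∈ X, ∃ δ < κ.ord, { y : GenCantor κ | ∀ β : Idx κ, β.1 < δ → y β = x β } ⊆ X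

/-- `X ⊆ 2^κ` is dense: it meets every basic open set. -/
def IsDenseK (X : Set (GenCantor κ)) : Prop :=
  ∀ δ < κ.ord, ∀ σ : Ordinal → Bool, (cyl κ δ σ ∩ X).Nonempty

/-- Coordinatewise addition modulo 2 on `2^κ`. -/
def addMod2 (x y : GenCantor κ) : GenCantor κ := fun α => Bool.xor (x α) (y α)

/-- The identification of `σ ∈ 2^{<κ}` (with domain `[0, δ)`) with the element of
`2^κ` extending `σ` by `0`'s. -/
def extendZero (δ : Ordinal) (σ : Ordinal → Bool) : GenCantor κ :=
  fun α => if α.1 < δ then σ α.1 else false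

end

end GenCichon

namespace GenCichon

open Cardinal Set Ordinal

noncomputable section Aux

open Function

variable {κ : Cardinal.{0}}

lemma aux_omega0_lt_ord (hunc : ℵ₀ < κ) : Ordinal.omega0 < κ.ord := by
  rw [Cardinal.lt_ord, Ordinal.card_omega0]; exact hunc

lemma aux_zero_lt_ord (hunc : ℵ₀ < κ) : (0 : Ordinal) < κ.ord := by
  rw [Cardinal.lt_ord, Ordinal.card_zero]; exact aleph0_pos.trans hunc

lemma aux_mk_Idx : #(Idx κ) = Cardinal.lift.{1} κ := by
  simpa [Cardinal.card_ord] using Ordinal.mk_Iio_ordinal κ.ord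

lemma aux_mk_setOf_lt {v : Ordinal} (hv : v ≤ κ.ord) :
    #{β : Idx κ | β.1 < v} = Cardinal.lift.{1} v.card := by
  have e : {β : Idx κ | β.1 < v} ≃ (Set.Iio v) :=
    { toFun := fun β => ⟨β.1.1, β.2⟩
      invFun := fun x => ⟨⟨x.1, lt_of_lt_of_le x.2 hv⟩, x.2⟩
      left_inv := fun β => rfl
      right_inv := fun x => rfl }
  rw [Cardinal.mk_congr e, Ordinal.mk_Iio_ordinal]

lemma aux_mk_tail (hunc : ℵ₀ < κ) (α₀ : Idx κ) :
    #{β : Idx κ | α₀ ≤ β} = Cardinal.lift.{1} κ := by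
  refine le_antisymm (le_trans (Cardinal.mk_set_le _) (le_of_eq aux_mk_Idx)) ?_
  by_contra hc
  push_neg at hc
  have hcover : (Set.univ : Set (Idx κ)) ⊆ {β : Idx κ | β.1 < α₀.1} ∪ {β : Idx κ | α₀ ≤ β} := by
    intro β _
    rcases le_or_gt α₀ β with hle | hlt
    · exact Or.inr hle
    · exact Or.inl hlt
  have h1 : #{β : Idx κ | β.1 < α₀.1} < Cardinal.lift.{1} κ := by
    rw [aux_mk_setOf_lt (le_of_lt α₀.2)]
    exact Cardinal.lift_lt.2 (Cardinal.lt_ord.1 α₀.2)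
  have h2 : Cardinal.lift.{1} κ ≤ #({β : Idx κ | β.1 < α₀.1} ∪ {β : Idx κ | α₀ ≤ β} : Set (Idx κ)) := by
    rw [← aux_mk_Idx, ← Cardinal.mk_univ]
    exact Cardinal.mk_le_mk_of_subset hcover
  have h3 := h2.trans (Cardinal.mk_union_le _ _)
  have h4 : #{β : Idx κ | β.1 < α₀.1} + #{β : Idx κ | α₀ ≤ β} < Cardinal.lift.{1} κ :=
    Cardinal.add_lt_of_lt (Cardinal.aleph0_le_lift.2 hunc.le) h1 hc
  exact absurd (h3.trans_lt h4) (lt_irrefl _)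

/-- Existence of a strictly increasing `ι` with `b (ι α) ≥ max (a α, ω)`. -/
lemma aux_exists_iota (hunc : ℵ₀ < κ) (hreg : κ.IsRegular)
    (a b : GenBaire κ) (hb : TendsToTop κ b) :
    ∃ ι : Idx κ → Idx κ, Function.Injective ι ∧
      (∀ α : Idx κ, (a α).1 ≤ (b (ι α)).1) ∧
      (∀ α : Idx κ, Ordinal.omega0 ≤ (b (ι α)).1) := by
  classical
  set ωI : Idx κ := ⟨Ordinal.omega0, aux_omega0_lt_ord hunc⟩ with hωI
  have thr : ∀ α : Idx κ, ∃ t : Idx κ, ∀ β : Idx κ, t ≤ β →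
      (a α).1 ≤ (b β).1 ∧ Ordinal.omega0 ≤ (b β).1 := by
    intro α
    obtain ⟨t1, ht1⟩ := hb (a α)
    obtain ⟨t2, ht2⟩ := hb ωI
    refine ⟨max t1 t2, fun β hβ => ⟨?_, ?_⟩⟩
    · exact Subtype.coe_le_coe.2 (ht1 β (le_trans (le_max_left _ _) hβ))
    · exact Subtype.coe_le_coe.2 (ht2 β (le_trans (le_max_right _ _) hβ))
  set Pf : Ordinal → Ordinal := fun x =>
    if hx : x < κ.ord then ((thr ⟨x, hx⟩).choose).1 else 0 with hPf
  set S : Ordinal → Ordinal := fun x => Ordinal.bsup (x + 1) (fun y _ => Pf y) with hS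
  have hPf_lt : ∀ y, Pf y < κ.ord := by
    intro y
    by_cases hy : y < κ.ord
    · have h1 : Pf y = ((thr ⟨y, hy⟩).choose).1 := dif_pos hy
      rw [h1]; exact ((thr ⟨y, hy⟩).choose).2
    · have h1 : Pf y = 0 := dif_neg hy
      rw [h1]; exact aux_zero_lt_ord hunc
  have hS_lt : ∀ x, x < κ.ord → S x < κ.ord := by
    intro x hx
    refine Ordinal.bsup_lt_ord ?_ (fun i _ => hPf_lt i)
    rw [hreg.cof_eq, Ordinal.card_add, Ordinal.card_one]
    exact Cardinal.add_lt_of_lt hreg.aleph0_le (Cardinal.lt_ord.1 hx)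
      (lt_of_lt_of_le Cardinal.one_lt_aleph0 hreg.aleph0_le)
  have hS_mono : ∀ x y : Ordinal, x ≤ y → S x ≤ S y := by
    intro x y hxy
    rw [hS]
    refine Ordinal.bsup_le_iff.2 (fun i hi => ?_)
    exact Ordinal.le_bsup _ i (lt_of_lt_of_le hi (add_le_add_left hxy 1))
  have hι_lt : ∀ α : Idx κ, S α.1 + α.1 < κ.ord := by
    intro α
    rw [Cardinal.lt_ord, Ordinal.card_add]
    exact Cardinal.add_lt_of_lt hreg.aleph0_le
      (Cardinal.lt_ord.1 (hS_lt α.1 α.2)) (Cardinal.lt_ord.1 α.2)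
  set ι : Idx κ → Idx κ := fun α => ⟨S α.1 + α.1, hι_lt α⟩ with hιdef
  have hmono : StrictMono ι := by
    intro α α' hlt
    have h1 : α.1 < α'.1 := Subtype.coe_lt_coe.2 hlt
    have : S α.1 + α.1 < S α'.1 + α'.1 :=
      lt_of_lt_of_le (add_lt_add_right h1 _) (add_le_add_left (hS_mono _ _ h1.le) _)
    exact Subtype.mk_lt_mk.2 this
  have hthr_le : ∀ α : Idx κ, ((thr α).choose : Idx κ) ≤ ι α := by
    intro α
    have h1 : Pf α.1 = ((thr α).choose).1 := dif_pos α.2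
    have h2 : Pf α.1 ≤ S α.1 := by
      have hx : α.1 < α.1 + 1 := by
        rw [Ordinal.add_one_eq_succ]; exact Order.lt_succ α.1
      exact Ordinal.le_bsup (fun y _ => Pf y) α.1 hx
    have h3 : ((thr α).choose).1 ≤ S α.1 + α.1 :=
      le_trans (h1 ▸ h2) (le_self_add)
    exact Subtype.coe_le_coe.1 h3
  refine ⟨ι, hmono.injective, fun α => ?_, fun α => ?_⟩
  · exact ((thr α).choose_spec (ι α) (hthr_le α)).1
  · exact ((thr α).choose_spec (ι α) (hthr_le α)).2

/-- Lifting a partial `a`-slalom to a partial `b`-slalom along `ι`. -/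
lemma aux_transfer (hunc : ℵ₀ < κ) (a b : GenBaire κ) (ι : Idx κ → Idx κ)
    (hι : Function.Injective ι)
    (hab : ∀ α : Idx κ, (a α).1 ≤ (b (ι α)).1)
    (hω : ∀ α : Idx κ, Ordinal.omega0 ≤ (b (ι α)).1)
    (ψ : PartialSlalom κ a) :
    ∃ φ : PartialSlalom κ b, ∀ f : GenBaire κ,
      PLocalizes κ ψ (fun α => f (ι α)) → PLocalizes κ φ f := by
  classical
  have hne : Nonempty (Idx κ) := ⟨⟨0, aux_zero_lt_ord hunc⟩⟩
  set Fn : Idx κ → Set (Idx κ) := fun δ =>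
    if δ ∈ ι '' ψ.dom then ψ.fn (Function.invFun ι δ) ∪ {β : Idx κ | β.1 < (b δ).1}
    else ∅ with hFn
  have hFn_eq : ∀ α : Idx κ, α ∈ ψ.dom →
      Fn (ι α) = ψ.fn α ∪ {β : Idx κ | β.1 < (b (ι α)).1} := by
    intro α hα
    have h1 : Fn (ι α) = ψ.fn (Function.invFun ι (ι α)) ∪ {β : Idx κ | β.1 < (b (ι α)).1} :=
      if_pos (Set.mem_image_of_mem ι hα)
    rw [h1, Function.leftInverse_invFun hι α]
  have hcard : ∀ α : Idx κ, α ∈ ψ.dom → #(Fn (ι α)) = Cardinal.lift.{1} (b (ι α)).1.card := by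
    intro α hα
    rw [hFn_eq α hα]
    have hT : #{β : Idx κ | β.1 < (b (ι α)).1} = Cardinal.lift.{1} (b (ι α)).1.card :=
      aux_mk_setOf_lt (le_of_lt (b (ι α)).2)
    have hs : #(ψ.fn α) ≤ #{β : Idx κ | β.1 < (b (ι α)).1} := by
      rw [ψ.fn_card α hα, hT]
      exact Cardinal.lift_le.2 (Ordinal.card_le_card (hab α))
    have hinf : ℵ₀ ≤ #{β : Idx κ | β.1 < (b (ι α)).1} := by
      rw [hT, ← Cardinal.lift_aleph0.{1, 0}]
      exact Cardinal.lift_le.2 (Ordinal.aleph0_le_card.2 (hω α))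
    refine le_antisymm ?_ ?_
    · refine le_trans (Cardinal.mk_union_le _ _) ?_
      rw [← hT]
      exact le_trans (add_le_add_left hs _) (le_of_eq (Cardinal.add_eq_self hinf))
    · rw [← hT]
      exact Cardinal.mk_le_mk_of_subset subset_union_right
  refine ⟨⟨ι '' ψ.dom, ?_, Fn, ?_, ?_⟩, ?_⟩
  · rw [Cardinal.mk_image_eq hι, ψ.dom_card]
  · rintro δ ⟨α, hα, rfl⟩
    exact hcard α hα
  · intro δ hδ
    exact if_neg hδ
  · intro f hloc
    unfold PLocalizes at hloc ⊢
    have hsub : {δ : Idx κ | δ ∈ ι '' ψ.dom ∧ f δ ∉ Fn δ} ⊆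
        ι '' {α : Idx κ | α ∈ ψ.dom ∧ f (ι α) ∉ ψ.fn α} := by
      rintro δ ⟨⟨α, hα, rfl⟩, hfδ⟩
      refine ⟨α, ⟨hα, fun hmem => hfδ ?_⟩, rfl⟩
      rw [hFn_eq α hα]
      exact Or.inl hmem
    calc #{δ : Idx κ | δ ∈ ι '' ψ.dom ∧ f δ ∉ Fn δ}
        ≤ #(ι '' {α : Idx κ | α ∈ ψ.dom ∧ f (ι α) ∉ ψ.fn α}) :=
          Cardinal.mk_le_mk_of_subset hsub
      _ = #{α : Idx κ | α ∈ ψ.dom ∧ f (ι α) ∉ ψ.fn α} := Cardinal.mk_image_eq hι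
      _ < Cardinal.lift.{1} κ := hloc

lemma aux_bPLoc_nonempty (hunc : ℵ₀ < κ) (h : GenBaire κ) :
    {c : Cardinal.{1} | ∃ F : Set (GenBaire κ),
      (∀ φ : PartialSlalom κ h, ∃ f ∈ F, ¬ PLocalizes κ φ f) ∧ c = #F}.Nonempty := by
  classical
  refine ⟨#(Set.univ : Set (GenBaire κ)), Set.univ, fun φ => ?_, rfl⟩
  have hex : ∀ α : Idx κ, ∃ x : Idx κ, x ∉ φ.fn α := by
    intro α
    by_cases hα : α ∈ φ.dom
    · have h1 : #(φ.fn α) < #(Idx κ) := by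
        rw [φ.fn_card α hα, aux_mk_Idx]
        exact Cardinal.lift_lt.2 (Cardinal.lt_ord.1 (h α).2)
      by_contra hcon
      push_neg at hcon
      have : φ.fn α = Set.univ := Set.eq_univ_of_forall hcon
      rw [this, Cardinal.mk_univ] at h1
      exact lt_irrefl _ h1
    · rw [φ.eq_empty_of_not_mem α hα]
      exact ⟨⟨0, aux_zero_lt_ord hunc⟩, Set.notMem_empty _⟩
  choose f hf using hex
  refine ⟨f, Set.mem_univ _, ?_⟩
  intro hloc
  unfold PLocalizes at hloc
  have heq : {α : Idx κ | α ∈ φ.dom ∧ f α ∉ φ.fn α} = φ.dom := by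
    ext α; simp [hf α]
  rw [heq, φ.dom_card] at hloc
  exact lt_irrefl _ hloc

lemma aux_exists_loc_slalom (hunc : ℵ₀ < κ) (h : GenBaire κ)
    (hh : TendsToTop κ h) (f : GenBaire κ) :
    ∃ φ : PartialSlalom κ h, PLocalizes κ φ f := by
  classical
  set ωI : Idx κ := ⟨Ordinal.omega0, aux_omega0_lt_ord hunc⟩ with hωI
  obtain ⟨α₀, hα₀⟩ := hh ωI
  set z : Idx κ := ⟨0, aux_zero_lt_ord hunc⟩ with hz
  set T : Idx κ → Set (Idx κ) := fun α => {β : Idx κ | β.1 < (h α).1} with hT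
  set Fn : Idx κ → Set (Idx κ) := fun α =>
    if α₀ ≤ α then (if f α ∈ T α then T α else insert (f α) (T α \ {z})) else ∅ with hFn
  have hmemT : ∀ α : Idx κ, α₀ ≤ α → f α ∈ Fn α := by
    intro α hα
    have h1 : Fn α = (if f α ∈ T α then T α else insert (f α) (T α \ {z})) := if_pos hα
    rw [h1]
    by_cases hfα : f α ∈ T α
    · rw [if_pos hfα]; exact hfα
    · rw [if_neg hfα]; exact Set.mem_insert _ _
  refine ⟨⟨{β : Idx κ | α₀ ≤ β}, aux_mk_tail hunc α₀, Fn, ?_, ?_⟩, ?_⟩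
  · intro α hα
    have hα' : α₀ ≤ α := hα
    have hTc : #(T α) = Cardinal.lift.{1} (h α).1.card := aux_mk_setOf_lt (le_of_lt (h α).2)
    have heq1 : Fn α = (if f α ∈ T α then T α else insert (f α) (T α \ {z})) := if_pos hα'
    rw [heq1]
    by_cases hfα : f α ∈ T α
    · rw [if_pos hfα]; exact hTc
    · rw [if_neg hfα]
      have hzT : z ∈ T α := by
        have hω : Ordinal.omega0 ≤ (h α).1 := Subtype.coe_le_coe.2 (hα₀ α hα')
        exact lt_of_lt_of_le Ordinal.omega0_pos hω
      have h1 : f α ∉ T α \ {z} := fun hx => hfα hx.1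
      rw [Cardinal.mk_insert h1]
      have h2 : #(T α \ {z} : Set (Idx κ)) + #({z} : Set (Idx κ)) = #(T α) :=
        Cardinal.mk_diff_add_mk (Set.singleton_subset_iff.2 hzT)
      rw [Cardinal.mk_singleton] at h2
      rw [h2, hTc]
  · intro α hα
    exact if_neg hα
  · unfold PLocalizes
    have heq : {α : Idx κ | α ∈ {β : Idx κ | α₀ ≤ β} ∧ f α ∉ Fn α} = ∅ := by
      ext α
      simp only [Set.mem_setOf_eq, Set.mem_empty_iff_false, iff_false, not_and, not_not]
      intro hα
      exact hmemT α hα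
    rw [heq]
    simp only [Cardinal.mk_emptyCollection]
    have h0 : Cardinal.lift.{1, 0} 0 < Cardinal.lift.{1, 0} κ :=
      Cardinal.lift_lt.2 (aleph0_pos.trans hunc)
    simpa using h0

lemma aux_dPLoc_nonempty (hunc : ℵ₀ < κ) (h : GenBaire κ) (hh : TendsToTop κ h) :
    {c : Cardinal.{1} | ∃ Φ : Set (PartialSlalom κ h),
      (∀ f : GenBaire κ, ∃ φ ∈ Φ, PLocalizes κ φ f) ∧ c = #Φ}.Nonempty := by
  refine ⟨#(Set.univ : Set (PartialSlalom κ h)), Set.univ, fun f => ?_, rfl⟩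
  obtain ⟨φ, hφ⟩ := aux_exists_loc_slalom hunc h hh f
  exact ⟨φ, Set.mem_univ _, hφ⟩

lemma aux_bPLoc_le (hunc : ℵ₀ < κ) (hreg : κ.IsRegular)
    (g h : GenBaire κ) (hh : TendsToTop κ h) : bPLoc κ g ≤ bPLoc κ h := by
  obtain ⟨ι, hι, hab, hω⟩ := aux_exists_iota hunc hreg g h hh
  unfold bPLoc
  refine le_csInf (aux_bPLoc_nonempty hunc h) ?_
  rintro c ⟨F, hF, rfl⟩
  have hmem : #((fun f : GenBaire κ => (fun α => f (ι α))) '' F) ∈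
      {c : Cardinal.{1} | ∃ F' : Set (GenBaire κ),
        (∀ ψ : PartialSlalom κ g, ∃ f ∈ F', ¬ PLocalizes κ ψ f) ∧ c = #F'} := by
    refine ⟨_, fun ψ => ?_, rfl⟩
    obtain ⟨φ, hφ⟩ := aux_transfer hunc g h ι hι hab hω ψ
    obtain ⟨f, hfF, hnf⟩ := hF φ
    exact ⟨fun α => f (ι α), Set.mem_image_of_mem _ hfF, fun hl => hnf (hφ f hl)⟩
  exact (csInf_le' hmem).trans Cardinal.mk_image_le

lemma aux_dPLoc_le (hunc : ℵ₀ < κ) (hreg : κ.IsRegular)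
    (g h : GenBaire κ) (hg : TendsToTop κ g) (hh : TendsToTop κ h) :
    dPLoc κ g ≤ dPLoc κ h := by
  obtain ⟨ι, hι, hab, hω⟩ := aux_exists_iota hunc hreg h g hg
  unfold dPLoc
  refine le_csInf (aux_dPLoc_nonempty hunc h hh) ?_
  rintro c ⟨Φ, hΦ, rfl⟩
  choose Lf hLf using aux_transfer hunc h g ι hι hab hω
  have hmem : #(Lf '' Φ) ∈
      {c : Cardinal.{1} | ∃ Ψ : Set (PartialSlalom κ g),
        (∀ f : GenBaire κ, ∃ φ ∈ Ψ, PLocalizes κ φ f) ∧ c = #Ψ} := by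
    refine ⟨_, fun f => ?_, rfl⟩
    obtain ⟨φ, hφΦ, hl⟩ := hΦ (fun α => f (ι α))
    exact ⟨Lf φ, Set.mem_image_of_mem _ hφΦ, hLf φ f hl⟩
  exact (csInf_le' hmem).trans Cardinal.mk_image_le

end Aux

theorem pLoc_independent_of_h (κ : Cardinal.{0})
    (hreg : κ.IsRegular) (hunc : Cardinal.aleph0 < κ)
    (hlim : ∀ μ < κ, Order.succ μ < κ)
    (g h : GenBaire κ) (hg : TendsToTop κ g) (hh : TendsToTop κ h) :
    bPLoc κ g = bPLoc κ h ∧ dPLoc κ g = dPLoc κ h :=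
  ⟨le_antisymm (aux_bPLoc_le hunc hreg g h hh) (aux_bPLoc_le hunc hreg h g hg),
   le_antisymm (aux_dPLoc_le hunc hreg g h hg hh) (aux_dPLoc_le hunc hreg h g hh hg)⟩

end GenCichon
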